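/- Let X be a random variable with E e^{α|X|} ≤ 2 for some α > 0, and let f(z) = E e^{izX} be its (analytic) characteristic function. Then for all complex z with |z| ≤ α/2 one has |f'(z)| ≤ 4/(αe) and |f(z) − 1| ≤ 2/e. -/

import Mathlib

open MeasureTheory ProbabilityTheory

lemma aux_le_exp (c t : ℝ) (hc : 0 < c) (_ht : 0 ≤ t) :
    t ≤ Real.exp (c * t) / (c * Real.exp 1) := by
  have h := Real.add_one_le_exp (c * t - 1)
  rw [Real.exp_sub] at h
  have h1 : c * t ≤ Real.exp (c * t) / Real.exp 1 := by linarith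
  rw [le_div_iff₀ (by positivity)]
  have he := Real.exp_pos 1
  have := mul_le_mul_of_nonneg_right h1 he.le
  rw [div_mul_cancel₀ _ he.ne'] at this
  nlinarith

lemma exp_sub_one_norm_le (w : ℂ) : ‖Complex.exp w - 1‖ ≤ ‖w‖ * Real.exp ‖w‖ := by
  have hw : w ∈ Metric.closedBall (0:ℂ) ‖w‖ := by
    simp [Metric.mem_closedBall, dist_zero_right]
  have h := Convex.norm_image_sub_le_of_norm_hasDerivWithin_le
    (f := Complex.exp) (f' := Complex.exp) (C := Real.exp ‖w‖)
    (s := Metric.closedBall (0:ℂ) ‖w‖)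
    (fun x _ => (Complex.hasDerivAt_exp x).hasDerivWithinAt)
    (fun x hx => by
      rw [Complex.norm_exp]
      apply Real.exp_le_exp.2
      have hx' : ‖x‖ ≤ ‖w‖ := by
        simpa [Metric.mem_closedBall, dist_zero_right] using hx
      exact le_trans (Complex.re_le_norm x) (by simpa using hx'))
    (convex_closedBall _ _)
    (Metric.mem_closedBall_self (norm_nonneg w))
    hw
  simpa [Complex.exp_zero, mul_comm] using h

lemma norm_exp_I_mul_le (z : ℂ) (x : ℝ) :
    ‖Complex.exp (Complex.I * z * x)‖ ≤ Real.exp (‖z‖ * |x|) := by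
  rw [Complex.norm_exp]
  apply Real.exp_le_exp.2
  calc (Complex.I * z * x).re ≤ ‖Complex.I * z * x‖ := Complex.re_le_norm _
    _ = ‖z‖ * |x| := by
        simp

/-- If `E e^{α|X|} ≤ 2` (`α > 0`) and `f(z) = E e^{izX}` is the analytic characteristic
function of `X`, then for all `|z| ≤ α/2` one has `|f'(z)| ≤ 4/(αe)` and `|f(z) − 1| ≤ 2/e`. -/
theorem stmt_5 {Ω : Type*} [MeasurableSpace Ω] {P : Measure Ω} [IsProbabilityMeasure P]
    (X : Ω → ℝ) (hmeas : Measurable X) (α : ℝ) (hα : 0 < α)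
    (hexp : ∫⁻ ω, ENNReal.ofReal (Real.exp (α * |X ω|)) ∂P ≤ 2)
    (f : ℂ → ℂ)
    (hf : ∀ z : ℂ, f z = ∫ ω, Complex.exp (Complex.I * z * X ω) ∂P) :
    ∀ z : ℂ, ‖z‖ ≤ α / 2 →
      ‖deriv f z‖ ≤ 4 / (α * Real.exp 1) ∧ ‖f z - 1‖ ≤ 2 / Real.exp 1 := by
  have he := Real.exp_pos 1
  set g : Ω → ℝ := fun ω => Real.exp (α * |X ω|) with hg_def
  have hgmeas : Measurable g := (Real.measurable_exp.comp (measurable_const.mul hmeas.abs))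
  have hg_nonneg : ∀ ω, 0 ≤ g ω := fun ω => (Real.exp_pos _).le
  have hg_int : Integrable g P := by
    refine ⟨hgmeas.aestronglyMeasurable, ?_⟩
    rw [hasFiniteIntegral_iff_ofReal (ae_of_all _ hg_nonneg)]
    exact lt_of_le_of_lt hexp (by norm_num)
  have hint_g : ∫ ω, g ω ∂P ≤ 2 := by
    rw [integral_eq_lintegral_of_nonneg_ae (ae_of_all _ hg_nonneg) hgmeas.aestronglyMeasurable]
    calc (∫⁻ ω, ENNReal.ofReal (g ω) ∂P).toReal ≤ (2 : ENNReal).toReal :=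
          ENNReal.toReal_mono (by norm_num) hexp
      _ = 2 := by norm_num
  -- pointwise bounds
  have key1 : ∀ t : ℝ, 0 ≤ t → t * Real.exp (α/2 * t) ≤ 2 / (α * Real.exp 1) * Real.exp (α * t) := by
    intro t ht
    have h := aux_le_exp (α/2) t (by positivity) ht
    calc t * Real.exp (α/2 * t)
        ≤ (Real.exp (α/2 * t) / (α/2 * Real.exp 1)) * Real.exp (α/2 * t) :=
          mul_le_mul_of_nonneg_right h (Real.exp_pos _).le
      _ = (Real.exp (α/2 * t) * Real.exp (α/2 * t)) / (α/2 * Real.exp 1) := by ring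
      _ = 2 / (α * Real.exp 1) * Real.exp (α * t) := by
          rw [← Real.exp_add]
          have : α/2 * t + α/2 * t = α * t := by ring
          rw [this]; field_simp
  have key2 : ∀ t : ℝ, 0 ≤ t → t * Real.exp (3*α/4 * t) ≤ 4 / (α * Real.exp 1) * Real.exp (α * t) := by
    intro t ht
    have h := aux_le_exp (α/4) t (by positivity) ht
    calc t * Real.exp (3*α/4 * t)
        ≤ (Real.exp (α/4 * t) / (α/4 * Real.exp 1)) * Real.exp (3*α/4 * t) :=
          mul_le_mul_of_nonneg_right h (Real.exp_pos _).le
      _ = (Real.exp (α/4 * t) * Real.exp (3*α/4 * t)) / (α/4 * Real.exp 1) := by ring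
      _ = 4 / (α * Real.exp 1) * Real.exp (α * t) := by
          rw [← Real.exp_add]
          have : α/4 * t + 3*α/4 * t = α * t := by ring
          rw [this]; field_simp
  set F : ℂ → Ω → ℂ := fun z ω => Complex.exp (Complex.I * z * X ω) with hF_def
  set F' : ℂ → Ω → ℂ := fun z ω => Complex.exp (Complex.I * z * X ω) * (Complex.I * X ω)
    with hF'_def
  have hF_meas : ∀ z : ℂ, AEStronglyMeasurable (F z) P := fun z =>
    ((measurable_const.mul (Complex.measurable_ofReal.comp hmeas)).cexp).aestronglyMeasurable
  have hF'_meas : ∀ z : ℂ, AEStronglyMeasurable (F' z) P := fun z =>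
    (((measurable_const.mul (Complex.measurable_ofReal.comp hmeas)).cexp).mul
      (measurable_const.mul (Complex.measurable_ofReal.comp hmeas))).aestronglyMeasurable
  have hF_norm : ∀ (z : ℂ) (ω : Ω), ‖z‖ ≤ α → ‖F z ω‖ ≤ g ω := by
    intro z ω hz
    refine (norm_exp_I_mul_le z (X ω)).trans (Real.exp_le_exp.2 ?_)
    exact mul_le_mul_of_nonneg_right hz (abs_nonneg _)
  have hF_int : ∀ z : ℂ, ‖z‖ ≤ α → Integrable (F z) P := by
    intro z hz
    exact hg_int.mono (hF_meas z) (ae_of_all _ fun ω => by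
      simpa [Real.norm_of_nonneg (hg_nonneg ω)] using hF_norm z ω hz)
  have hderiv : ∀ (ω : Ω) (z : ℂ), HasDerivAt (fun z => F z ω) (F' z ω) z := by
    intro ω z
    have h1 : HasDerivAt (fun z : ℂ => Complex.I * z * (X ω : ℂ)) (Complex.I * X ω) z := by
      simpa using (((hasDerivAt_id z).const_mul Complex.I).mul_const ((X ω : ℂ)))
    exact h1.cexp
  intro z hz
  -- derivative under the integral sign
  have main := hasDerivAt_integral_of_dominated_loc_of_deriv_le (μ := P) (x₀ := z)
    (F := F) (F' := F') (bound := fun ω => 4 / (α * Real.exp 1) * g ω)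
    (Metric.ball_mem_nhds z (show (0:ℝ) < α/4 by positivity))
    (Filter.Eventually.of_forall fun y => hF_meas y)
    (hF_int z (hz.trans (by linarith)))
    (hF'_meas z)
    (ae_of_all _ fun ω => by
      intro y hy
      have hy' : ‖y‖ ≤ 3*α/4 := by
        have h1 : ‖y - z‖ < α/4 := by simpa [dist_eq_norm] using hy
        calc ‖y‖ = ‖y - z + z‖ := by ring_nf
          _ ≤ ‖y - z‖ + ‖z‖ := norm_add_le _ _
          _ ≤ 3*α/4 := by linarith
      have hb : ‖F' y ω‖ ≤ |X ω| * Real.exp (3*α/4 * |X ω|) := by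
        rw [hF'_def]
        simp only [norm_mul, Complex.norm_I, Complex.norm_real, Real.norm_eq_abs, one_mul]
        have h2 : ‖Complex.exp (Complex.I * y * X ω)‖ ≤ Real.exp (3*α/4 * |X ω|) := by
          refine le_trans ?_ (Real.exp_le_exp.2 (mul_le_mul_of_nonneg_right hy' (abs_nonneg _)))
          simpa using norm_exp_I_mul_le y (X ω)
        calc ‖Complex.exp (Complex.I * y * X ω)‖ * |X ω|
            ≤ Real.exp (3*α/4 * |X ω|) * |X ω| :=
              mul_le_mul_of_nonneg_right h2 (abs_nonneg _)
          _ = |X ω| * Real.exp (3*α/4 * |X ω|) := by ring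
      exact hb.trans (key2 |X ω| (abs_nonneg _)))
    ((hg_int.const_mul _))
    (ae_of_all _ fun ω y _ => hderiv ω y)
  obtain ⟨hF'_int, hmain⟩ := main
  have hfeq : f = fun z => ∫ ω, F z ω ∂P := funext hf
  have hderiv_f : deriv f z = ∫ ω, F' z ω ∂P := by
    rw [hfeq]; exact hmain.deriv
  constructor
  · rw [hderiv_f]
    have hb : ∀ ω, ‖F' z ω‖ ≤ 2 / (α * Real.exp 1) * g ω := by
      intro ω
      have hb1 : ‖F' z ω‖ ≤ |X ω| * Real.exp (α/2 * |X ω|) := by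
        rw [hF'_def]
        simp only [norm_mul, Complex.norm_I, Complex.norm_real, Real.norm_eq_abs, one_mul]
        have h2 : ‖Complex.exp (Complex.I * z * X ω)‖ ≤ Real.exp (α/2 * |X ω|) := by
          refine le_trans ?_ (Real.exp_le_exp.2 (mul_le_mul_of_nonneg_right hz (abs_nonneg _)))
          simpa using norm_exp_I_mul_le z (X ω)
        calc ‖Complex.exp (Complex.I * z * X ω)‖ * |X ω|
            ≤ Real.exp (α/2 * |X ω|) * |X ω| := mul_le_mul_of_nonneg_right h2 (abs_nonneg _)
          _ = |X ω| * Real.exp (α/2 * |X ω|) := by ring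
      exact hb1.trans (key1 |X ω| (abs_nonneg _))
    calc ‖∫ ω, F' z ω ∂P‖ ≤ ∫ ω, 2 / (α * Real.exp 1) * g ω ∂P :=
          norm_integral_le_of_norm_le (hg_int.const_mul _) (ae_of_all _ hb)
      _ = 2 / (α * Real.exp 1) * ∫ ω, g ω ∂P := integral_const_mul _ _
      _ ≤ 2 / (α * Real.exp 1) * 2 :=
          mul_le_mul_of_nonneg_left hint_g (by positivity)
      _ = 4 / (α * Real.exp 1) := by ring
  · have h1 : f z - 1 = ∫ ω, (F z ω - 1) ∂P := by
      have h := integral_sub (hF_int z (hz.trans (by linarith))) (integrable_const (1:ℂ))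
      simp only [integral_const, probReal_univ, one_smul] at h
      rw [hf z, ← h]
    rw [h1]
    have hb : ∀ ω, ‖F z ω - 1‖ ≤ (1 / Real.exp 1) * g ω := by
      intro ω
      have h2 : ‖F z ω - 1‖ ≤ ‖Complex.I * z * X ω‖ * Real.exp ‖Complex.I * z * X ω‖ :=
        exp_sub_one_norm_le _
      have hn : ‖Complex.I * z * (X ω : ℂ)‖ = ‖z‖ * |X ω| := by
        simp
      rw [hn] at h2
      have h3 : ‖z‖ * |X ω| ≤ α/2 * |X ω| := mul_le_mul_of_nonneg_right hz (abs_nonneg _)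
      have h4 : ‖z‖ * |X ω| * Real.exp (‖z‖ * |X ω|) ≤ α/2 * |X ω| * Real.exp (α/2 * |X ω|) := by
        apply mul_le_mul h3 (Real.exp_le_exp.2 h3) (Real.exp_pos _).le
        positivity
      have h5 : α/2 * |X ω| * Real.exp (α/2 * |X ω|) ≤ (1 / Real.exp 1) * g ω := by
        have := key1 |X ω| (abs_nonneg _)
        have h6 : α/2 * (|X ω| * Real.exp (α/2 * |X ω|)) ≤ α/2 * (2 / (α * Real.exp 1) * Real.exp (α * |X ω|)) :=
          mul_le_mul_of_nonneg_left this (by positivity)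
        calc α/2 * |X ω| * Real.exp (α/2 * |X ω|)
            = α/2 * (|X ω| * Real.exp (α/2 * |X ω|)) := by ring
          _ ≤ α/2 * (2 / (α * Real.exp 1) * Real.exp (α * |X ω|)) := h6
          _ = (1 / Real.exp 1) * g ω := by rw [hg_def]; field_simp
      linarith
    calc ‖∫ ω, (F z ω - 1) ∂P‖ ≤ ∫ ω, (1 / Real.exp 1) * g ω ∂P :=
          norm_integral_le_of_norm_le (hg_int.const_mul _) (ae_of_all _ hb)
      _ = (1 / Real.exp 1) * ∫ ω, g ω ∂P := integral_const_mul _ _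
      _ ≤ (1 / Real.exp 1) * 2 := mul_le_mul_of_nonneg_left hint_g (by positivity)
      _ = 2 / Real.exp 1 := by ring
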